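/- With the Syracuse map S and the sequences a_i(N), R_i(N) as defined, let N ∈ ℕ \ pℕ and set m = a_1(N) + ... + a_k(N). If M ≡ N (mod p^{m+1}) then a_i(M) = a_i(N) for all i = 1,...,k and R_i(M) = R_i(N) for all i = 1,...,k+1. -/

import Mathlib

private lemma val_eq' {p : ℕ} (hp : 2 ≤ p) {n ν : ℕ} (hn : n ≠ 0) (h1 : p ^ ν ∣ n)
    (h2 : ¬ p ^ (ν + 1) ∣ n) : padicValNat p n = ν := by
  rw [padicValNat_def' (by omega) hn]
  exact multiplicity_eq_of_dvd_of_not_dvd h1 h2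

private lemma val_not_succ' {p : ℕ} (hp : 2 ≤ p) {n : ℕ} (hn : n ≠ 0) :
    ¬ p ^ (padicValNat p n + 1) ∣ n := by
  have hfin : FiniteMultiplicity p n :=
    Nat.finiteMultiplicity_iff.2 ⟨by omega, Nat.pos_of_ne_zero hn⟩
  rw [padicValNat_def' (by omega) hn]
  exact hfin.not_pow_dvd_of_multiplicity_lt (Nat.lt_succ_self _)

/-- Periodicity of the valuation and residue sequences: if `M ≡ N (mod p^{m+1})`
with `m = a_1(N)+...+a_k(N)`, then the first `k` valuations and first `k+1`
residue values of `M` and `N` agree. -/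
theorem stmt2 (p q : ℕ) (hp : 2 ≤ p) (hq : 2 ≤ q) (hpq : Nat.Coprime p q)
    (r : ℕ → ℤ) (hr1 : ∀ j, 1 ≤ j → j < p → 1 ≤ q * j + r j)
    (hr2 : ∀ j, 1 ≤ j → j < p → (p : ℤ) ∣ q * j + r j)
    (S : ℕ → ℕ)
    (hS : ∀ N, S N = ((q * N : ℤ) + r (N % p)).toNat /
      p ^ (padicValNat p ((q * N : ℤ) + r (N % p)).toNat))
    (a : ℕ → ℕ → ℕ)
    (ha : ∀ i N, a i N = padicValNat p ((q * S^[i] N : ℤ) + r (S^[i] N % p)).toNat)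
    (R : ℕ → ℕ → ℤ)
    (hR : ∀ i N, R i N = r (S^[i] N % p)) :
    ∀ N, 1 ≤ N → ¬ p ∣ N → ∀ k : ℕ, ∀ m : ℕ, m = ∑ i ∈ Finset.range k, a i N →
      ∀ M : ℕ, 1 ≤ M → M % p ^ (m + 1) = N % p ^ (m + 1) →
        (∀ i < k, a i M = a i N) ∧ (∀ i < k + 1, R i M = R i N) := by
  -- generic facts
  have hxpos : ∀ n : ℕ, ¬ p ∣ n → 1 ≤ ((q : ℤ) * n + r (n % p)) := by
    intro n hn
    have h1 : 1 ≤ n % p := Nat.one_le_iff_ne_zero.2 fun h => hn (Nat.dvd_of_mod_eq_zero h)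
    have h2 : n % p < p := Nat.mod_lt _ (by omega)
    have h3 := hr1 _ h1 h2
    have h4 : ((n % p : ℕ) : ℤ) ≤ (n : ℤ) := by exact_mod_cast Nat.mod_le n p
    have h5 : (q : ℤ) * ((n % p : ℕ) : ℤ) ≤ (q : ℤ) * n :=
      mul_le_mul_of_nonneg_left h4 (by positivity)
    linarith
  have hashift : ∀ i n, a (i + 1) n = a i (S n) := by
    intro i n; rw [ha, ha, Function.iterate_succ_apply]
  have hRshift : ∀ i n, R (i + 1) n = R i (S n) := by
    intro i n; rw [hR, hR, Function.iterate_succ_apply]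
  have ha0 : ∀ n, a 0 n = padicValNat p ((q * n : ℤ) + r (n % p)).toNat := by
    intro n; rw [ha]; simp
  have hSfact : ∀ n, 1 ≤ n → ¬ p ∣ n →
      1 ≤ S n ∧ ¬ p ∣ S n ∧ ((q : ℤ) * n + r (n % p)) = (p : ℤ) ^ (a 0 n) * S n := by
    intro n hn1 hnp
    have hx1 := hxpos n hnp
    have hcast : ((((q : ℤ) * n + r (n % p)).toNat : ℤ)) = (q : ℤ) * n + r (n % p) :=
      Int.toNat_of_nonneg (by linarith)
    set x : ℕ := ((q : ℤ) * n + r (n % p)).toNat with hxdef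
    have hxne : x ≠ 0 := by
      intro h; rw [h] at hcast; simp at hcast; linarith
    have hd : p ^ (padicValNat p x) ∣ x := pow_padicValNat_dvd
    have hnd : ¬ p ^ (padicValNat p x + 1) ∣ x := val_not_succ' hp hxne
    have hSn : S n = x / p ^ (padicValNat p x) := hS n
    have hxeq : x = p ^ (padicValNat p x) * S n := by
      rw [hSn]; exact (Nat.mul_div_cancel' hd).symm
    have hS1 : 1 ≤ S n := by
      rcases Nat.eq_zero_or_pos (S n) with h | h
      · rw [h, Nat.mul_zero] at hxeq; exact absurd hxeq hxne
      · exact h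
    have hSp : ¬ p ∣ S n := by
      rintro ⟨c, hc⟩
      apply hnd
      refine ⟨c, ?_⟩
      conv_lhs => rw [hxeq, hc]
      ring
    refine ⟨hS1, hSp, ?_⟩
    rw [ha0, ← hxdef, ← hcast]
    exact_mod_cast hxeq
  suffices H : ∀ k N M, 1 ≤ N → ¬ p ∣ N → 1 ≤ M →
      M % p ^ ((∑ i ∈ Finset.range k, a i N) + 1) = N % p ^ ((∑ i ∈ Finset.range k, a i N) + 1) →
      (∀ i < k, a i M = a i N) ∧ (∀ i < k + 1, R i M = R i N) by
    intro N hN hpN k m hm M hM hmod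
    subst hm
    exact H k N M hN hpN hM hmod
  intro k
  induction k with
  | zero =>
    intro N M hN hpN hM hmod
    simp only [Finset.sum_range_zero, zero_add, pow_one] at hmod
    constructor
    · intro i hi; omega
    · intro i hi
      have hi0 : i = 0 := by omega
      subst hi0
      rw [hR, hR]
      simp only [Function.iterate_zero, id]
      rw [hmod]
  | succ k ih =>
    intro N M hN hpN hM hmod
    set m := ∑ i ∈ Finset.range (k + 1), a i N with hmdef
    set ν := a 0 N with hνdef
    set m' := ∑ i ∈ Finset.range k, a i (S N) with hm'def
    have hmsum : m = ν + m' := by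
      rw [hmdef, hm'def, hνdef, Finset.sum_range_succ']
      have h1 : ∀ i, a (i + 1) N = a i (S N) := fun i => hashift i N
      simp only [h1]
      omega
    have hνle : ν ≤ m := by rw [hmsum]; omega
    -- residues agree mod p
    have hj : M % p = N % p := by
      have hd : p ∣ p ^ (m + 1) := dvd_pow_self p (Nat.succ_ne_zero m)
      calc M % p = M % p ^ (m + 1) % p := (Nat.mod_mod_of_dvd M hd).symm
        _ = N % p ^ (m + 1) % p := by rw [hmod]
        _ = N % p := Nat.mod_mod_of_dvd N hd
    have hpM : ¬ p ∣ M := by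
      intro h
      apply hpN
      apply Nat.dvd_of_mod_eq_zero
      rw [← hj]
      obtain ⟨c, rfl⟩ := h
      exact Nat.mul_mod_right p c
    -- integer congruence between the affine images
    have hd0 : ((p : ℤ)) ^ (m + 1) ∣ (N : ℤ) - M := by
      have hme : Nat.ModEq (p ^ (m + 1)) M N := hmod
      have := (Nat.modEq_iff_dvd).mp hme
      push_cast at this ⊢
      exact this
    have hdiff : (p : ℤ) ^ (m + 1) ∣ ((q : ℤ) * M + r (N % p)) - ((q : ℤ) * N + r (N % p)) := by
      have heq : ((q : ℤ) * M + r (N % p)) - ((q : ℤ) * N + r (N % p)) = -((q : ℤ) * ((N : ℤ) - M)) := by ring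
      rw [heq]
      exact dvd_neg.mpr (hd0.mul_left _)
    obtain ⟨hSN1, hSNp, hSNeq⟩ := hSfact N hN hpN
    obtain ⟨hSM1, hSMp, hSMeq⟩ := hSfact M hM hpM
    -- identify the valuation of M's image
    have hx1N := hxpos N hpN
    have hx1M := hxpos M hpM
    have hcastN : ((((q : ℤ) * N + r (N % p)).toNat : ℤ)) = (q : ℤ) * N + r (N % p) :=
      Int.toNat_of_nonneg (by linarith)
    have hcastM : ((((q : ℤ) * M + r (M % p)).toNat : ℤ)) = (q : ℤ) * M + r (M % p) :=
      Int.toNat_of_nonneg (by linarith)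
    have hxNne : (((q : ℤ) * N + r (N % p)).toNat) ≠ 0 := by
      intro h; rw [h] at hcastN; simp at hcastN; linarith
    have hxMne : (((q : ℤ) * M + r (M % p)).toNat) ≠ 0 := by
      intro h; rw [h] at hcastM; simp at hcastM; linarith
    have hdN : ((p : ℤ)) ^ ν ∣ ((q : ℤ) * N + r (N % p)) := ⟨(S N : ℤ), hSNeq⟩
    have hndN : ¬ ((p : ℤ)) ^ (ν + 1) ∣ ((q : ℤ) * N + r (N % p)) := by
      intro h
      have h2 : (p : ℕ) ^ (ν + 1) ∣ (((q : ℤ) * N + r (N % p)).toNat) := by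
        rw [← hcastN] at h
        exact_mod_cast h
      have h3 : ν = padicValNat p (((q : ℤ) * N + r (N % p)).toNat) := by
        rw [hνdef, ha0 N]
      rw [h3] at h2
      exact val_not_succ' hp hxNne h2
    have hdM : ((p : ℤ)) ^ ν ∣ ((q : ℤ) * M + r (N % p)) := by
      have h1 : ((q : ℤ) * M + r (N % p)) =
          ((q : ℤ) * N + r (N % p)) + (((q : ℤ) * M + r (N % p)) - ((q : ℤ) * N + r (N % p))) := by ring
      rw [h1]
      exact dvd_add hdN ((pow_dvd_pow _ (by omega)).trans hdiff)
    have hndM : ¬ ((p : ℤ)) ^ (ν + 1) ∣ ((q : ℤ) * M + r (N % p)) := by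
      intro h
      apply hndN
      have h1 : ((q : ℤ) * N + r (N % p)) =
          ((q : ℤ) * M + r (N % p)) - (((q : ℤ) * M + r (N % p)) - ((q : ℤ) * N + r (N % p))) := by ring
      rw [h1]
      exact dvd_sub h ((pow_dvd_pow _ (by omega)).trans hdiff)
    have hcastM' : ((((q : ℤ) * M + r (N % p)).toNat : ℤ)) = (q : ℤ) * M + r (N % p) := by
      rw [← hj]; exact hcastM
    have hxMne' : (((q : ℤ) * M + r (N % p)).toNat) ≠ 0 := by
      rw [← hj]; exact hxMne
    have haM : a 0 M = ν := by
      rw [ha0 M, hj]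
      apply val_eq' hp hxMne'
      · have h1 : ((p : ℤ)) ^ ν ∣ ((((q : ℤ) * M + r (N % p)).toNat : ℤ)) := by
          rw [hcastM']; exact hdM
        exact_mod_cast h1
      · intro h
        apply hndM
        rw [← hcastM']
        exact_mod_cast h
    -- congruence of the iterates
    have hSMeq' : ((q : ℤ) * M + r (N % p)) = (p : ℤ) ^ ν * S M := by
      rw [hj, haM] at hSMeq
      exact hSMeq
    have hmod' : S M % p ^ (m' + 1) = S N % p ^ (m' + 1) := by
      have hdvd : (p : ℤ) ^ (m' + 1) ∣ (S N : ℤ) - S M := by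
        have h1 : (p : ℤ) ^ (m + 1) ∣ (p : ℤ) ^ ν * ((S N : ℤ) - S M) := by
          have heq : (p : ℤ) ^ ν * ((S N : ℤ) - S M) =
              -(((q : ℤ) * M + r (N % p)) - ((q : ℤ) * N + r (N % p))) := by
            rw [hSNeq]
            rw [hSMeq']
            rw [hνdef]
            ring
          rw [heq]
          exact dvd_neg.mpr hdiff
        have h2 : (p : ℤ) ^ (m + 1) = (p : ℤ) ^ ν * (p : ℤ) ^ (m' + 1) := by
          rw [← pow_add]; congr 1; omega
        rw [h2] at h1
        exact (mul_dvd_mul_iff_left (pow_ne_zero ν (by exact_mod_cast (by omega : p ≠ 0)))).mp h1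
      have h3 : ((p ^ (m' + 1) : ℕ) : ℤ) ∣ (S N : ℤ) - (S M : ℤ) := by push_cast; exact hdvd
      exact (Nat.modEq_iff_dvd).mpr h3
    obtain ⟨iha, ihR⟩ := ih (S N) (S M) hSN1 hSNp hSM1 hmod'
    constructor
    · intro i hi
      match i with
      | 0 => rw [haM]
      | j + 1 =>
        rw [hashift, hashift]
        exact iha j (by omega)
    · intro i hi
      match i with
      | 0 =>
        rw [hR, hR]
        simp only [Function.iterate_zero, id]
        rw [hj]
      | j + 1 =>
        rw [hRshift, hRshift]
        exact ihR j (by omega)
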